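/- For every strictly positive surreal number x, the map z ↦ x ⨰ z is a (<, ⊏)-isomorphism from No onto its image x ⨰ No; in particular x ⨰ No is a surreal substructure. -/

import Mathlib

open Ordinal

attribute [local instance] Classical.propDecidable

/-- A surreal number presented as a sign sequence: a map from an ordinal (its
length) to `{-1, +1}`, extended by `0` beyond its length. -/
structure SSurreal : Type 1 where
  length : Ordinal.{0}
  sign : Ordinal → ℤ
  sign_mem : ∀ α, α < length → sign α = 1 ∨ sign α = -1
  sign_zero : ∀ α, ¬ α < length → sign α = 0

namespace SSurreal

/-- Simplicity: `x ⊑ y`, i.e. `x` is an initial segment of `y`. -/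
def sle (x y : SSurreal) : Prop := ∀ α, α < x.length → x.sign α = y.sign α

/-- Strict simplicity `x ⊏ y`. -/
def slt (x y : SSurreal) : Prop := sle x y ∧ x ≠ y

/-- The (lexicographic, Conway) order on sign sequences. -/
def lt (x y : SSurreal) : Prop :=
  ∃ α, (∀ β, β < α → x.sign β = y.sign β) ∧ x.sign α < y.sign α

/-- The empty sign sequence, i.e. the surreal number `0`. -/
noncomputable def zero : SSurreal :=
  ⟨0, fun _ => 0, fun α h => absurd h (not_lt_of_ge (zero_le (a := α))), fun _ _ => rfl⟩

/-- The ordinal `o` viewed as the constant `+1` sign sequence of length `o`. -/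
noncomputable def ofOrdinal (o : Ordinal) : SSurreal :=
  ⟨o, fun α => if α < o then 1 else 0, fun α h => Or.inl (if_pos h), fun α h => if_neg h⟩

/-- The surreal number `1`. -/
noncomputable def one : SSurreal := ofOrdinal 1

/-- The surreal number `-1`. -/
noncomputable def negOne : SSurreal :=
  ⟨1, fun α => if α < 1 then -1 else 0, fun α h => Or.inr (if_pos h), fun α h => if_neg h⟩

/-- Negation: flip every sign. -/
noncomputable def neg (x : SSurreal) : SSurreal :=
  ⟨x.length, fun α => - x.sign α,
    fun α h => by rcases x.sign_mem α h with h' | h' <;> simp [h'],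
    fun α h => by simp [x.sign_zero α h]⟩

/-- Concatenation `x ∔ y` of sign sequences. -/
noncomputable def concat (x y : SSurreal) : SSurreal where
  length := x.length + y.length
  sign α := if α < x.length then x.sign α else y.sign (α - x.length)
  sign_mem := by
    intro α h
    by_cases hx : α < x.length
    · rw [if_pos hx]; exact x.sign_mem α hx
    · rw [if_neg hx]
      refine y.sign_mem _ ?_
      have hle : x.length ≤ α := le_of_not_gt hx
      have := Ordinal.sub_lt_of_le hle (c := y.length)
      exact this.mpr h
  sign_zero := by
    intro α h
    have hx : ¬ α < x.length := fun hx =>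
      h (hx.trans_le le_self_add)
    rw [if_neg hx]
    refine y.sign_zero _ ?_
    intro hy
    exact h ((Ordinal.sub_lt_of_le (le_of_not_gt hx)).mp hy)

/-- The concatenation product `x ⨰ y` of sign sequences. -/
noncomputable def mul (x y : SSurreal) : SSurreal where
  length := x.length * y.length
  sign γ := if γ < x.length * y.length then y.sign (γ / x.length) * x.sign (γ % x.length) else 0
  sign_mem := by
    intro γ h
    rw [if_pos h]
    have hx0 : x.length ≠ 0 := by
      intro h0; rw [h0, zero_mul] at h; exact (not_lt_of_ge (zero_le (a := γ))) h
    have h1 : γ / x.length < y.length := by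
      rwa [Ordinal.div_lt hx0]
    have h2 : γ % x.length < x.length := Ordinal.mod_lt γ hx0
    rcases y.sign_mem _ h1 with hy | hy <;> rcases x.sign_mem _ h2 with hx | hx <;>
      simp [hy, hx]
  sign_zero := fun γ h => if_neg h

/-- `s` is the supremum of `C` with respect to simplicity. -/
def IsSimpSup (C : Set SSurreal) (s : SSurreal) : Prop :=
  (∀ x ∈ C, sle x s) ∧ ∀ t, (∀ x ∈ C, sle x t) → sle s t

/-- The supremum of a ⊏-chain of sign sequences (their union), when it
exists; junk value `zero` otherwise. -/
noncomputable def chainSup (C : Set SSurreal) : SSurreal :=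
  if h : ∃ s, IsSimpSup C s then h.choose else zero

/-- Transfinite concatenation `[α, f] = ∔_{γ<α} f(γ)`. -/
noncomputable def concatSum (α : Ordinal) (f : Ordinal → SSurreal) : SSurreal :=
  Ordinal.limitRecOn α zero (fun β ih => concat ih (f β))
    (fun γ _ ih => chainSup (Set.range fun p : Set.Iio γ => ih p.1 p.2))

/-- Restriction of `z` to an initial segment of length (at most) `β`. -/
noncomputable def trunc (z : SSurreal) (β : Ordinal) : SSurreal where
  length := min β z.length
  sign α := if α < min β z.length then z.sign α else 0
  sign_mem := fun α h => by
    rw [if_pos h]; exact z.sign_mem α (h.trans_le (min_le_right _ _))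
  sign_zero := fun α h => if_neg h

/-- The number of `+1` signs occurring in `s` strictly below `γ`. -/
noncomputable def countPlus (s : Ordinal → ℤ) (γ : Ordinal) : Ordinal :=
  Ordinal.limitRecOn γ 0 (fun β ih => if s β = 1 then ih + 1 else ih)
    (fun γ' _ ih => ⨆ β : Set.Iio γ', ih β.1 β.2)

/-- `τ_u`: the ordinal number of `+1` signs in the sign sequence of `u`. -/
noncomputable def tau (u : SSurreal) : Ordinal := countPlus u.sign u.length

end SSurreal

namespace SSurreal

lemma ext' {z w : SSurreal} (hl : z.length = w.length)
    (hs : ∀ α, z.sign α = w.sign α) : z = w := by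
  cases z; cases w
  simp only [mk.injEq] at *
  exact ⟨hl, funext hs⟩

lemma mul_sign (x z : SSurreal) (hL : x.length ≠ 0) (γ : Ordinal) :
    (mul x z).sign γ = z.sign (γ / x.length) * x.sign (γ % x.length) := by
  show (if γ < x.length * z.length then _ else (0:ℤ)) = _
  split_ifs with h
  · rfl
  · have h' : ¬ γ / x.length < z.length := by rwa [Ordinal.div_lt hL]
    rw [z.sign_zero _ h', zero_mul]

lemma pos_facts (x : SSurreal) (hx : lt zero x) :
    x.sign 0 = 1 ∧ x.length ≠ 0 := by
  obtain ⟨α, hb, hα⟩ := hx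
  have hz : (zero.sign α : ℤ) = 0 := rfl
  rw [hz] at hα
  have hαlen : α < x.length := by
    by_contra h
    rw [x.sign_zero α h] at hα; exact lt_irrefl 0 hα
  have hlen : x.length ≠ 0 := fun h => by
    rw [h] at hαlen; exact (not_lt_of_ge (zero_le (a := α))) hαlen
  have h0len : (0 : Ordinal) < x.length := pos_iff_ne_zero.2 hlen
  have hα0 : α = 0 := by
    by_contra h
    have h0α : (0 : Ordinal) < α := pos_iff_ne_zero.2 h
    have := hb 0 h0α
    have hz0 : (zero.sign 0 : ℤ) = 0 := rfl
    rw [hz0] at this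
    rcases x.sign_mem 0 h0len with h' | h' <;> rw [← this] at h' <;> omega
  subst hα0
  rcases x.sign_mem 0 h0len with h' | h'
  · exact ⟨h', hlen⟩
  · rw [h'] at hα; omega

lemma mul_sign_mul (x z : SSurreal) (hL : x.length ≠ 0) (α : Ordinal) :
    (mul x z).sign (x.length * α) = z.sign α * x.sign 0 := by
  rw [mul_sign x z hL, Ordinal.mul_div_cancel _ hL, Ordinal.mul_mod]

lemma lt_div_iff {γ α L : Ordinal} (hL : L ≠ 0) :
    α < γ / L ↔ L * α + L ≤ γ := by
  rw [← Ordinal.mul_succ, ← not_lt (a := γ), ← Ordinal.div_lt hL,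
    Order.lt_succ_iff, not_le]

end SSurreal

open SSurreal in
/-- for `x > 0`, the map `z ↦ x ⨰ z` is a `(<, ⊏)`-isomorphism
from `No` onto its image `x ⨰ No`; in particular `x ⨰ No` is a surreal
substructure. -/
theorem mul_left_is_iso_onto_image (x : SSurreal) (hx : lt zero x) :
    (∀ z w : SSurreal, lt z w ↔ lt (mul x z) (mul x w)) ∧
    (∀ z w : SSurreal, slt z w ↔ slt (mul x z) (mul x w)) := by
  obtain ⟨hs0, hL⟩ := pos_facts x hx
  have hLpos : (0 : Ordinal) < x.length := pos_iff_ne_zero.2 hL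
  have hsign : ∀ (z : SSurreal) (α : Ordinal),
      (mul x z).sign (x.length * α) = z.sign α := fun z α => by
    rw [mul_sign_mul x z hL, hs0, mul_one]
  have hlt : ∀ z w : SSurreal, lt z w ↔ lt (mul x z) (mul x w) := by
    intro z w
    constructor
    · rintro ⟨α, hb, hα⟩
      refine ⟨x.length * α, fun γ hγ => ?_, ?_⟩
      · rw [mul_sign x z hL, mul_sign x w hL,
          hb _ (by rwa [Ordinal.div_lt hL])]
      · rw [hsign, hsign]; exact hα
    · rintro ⟨γ, hb, hγ⟩
      by_cases hmod : γ % x.length = 0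
      · refine ⟨γ / x.length, fun β hβ => ?_, ?_⟩
        · have h1 : x.length * β < γ :=
            lt_of_lt_of_le
              (by simpa using (add_lt_add_iff_left (x.length * β)).2 hLpos)
              ((lt_div_iff hL).1 hβ)
          have := hb _ h1
          rwa [hsign, hsign] at this
        · rw [mul_sign x z hL, mul_sign x w hL, hmod, hs0, mul_one, mul_one] at hγ
          exact hγ
      · exfalso
        have hlt' : x.length * (γ / x.length) < γ := by
          conv_rhs => rw [← Ordinal.div_add_mod γ x.length]
          simpa using (add_lt_add_iff_left (x.length * (γ / x.length))).2
            (pos_iff_ne_zero.2 hmod)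
        have heq := hb _ hlt'
        rw [hsign, hsign] at heq
        rw [mul_sign x z hL, mul_sign x w hL, heq] at hγ
        exact lt_irrefl _ hγ
  have hinj : ∀ z w : SSurreal, mul x z = mul x w → z = w := by
    intro z w h
    have hlen : z.length = w.length := by
      have h2 : x.length * z.length = x.length * w.length := congrArg length h
      calc z.length = x.length * z.length / x.length :=
            (Ordinal.mul_div_cancel _ hL).symm
        _ = x.length * w.length / x.length := by rw [h2]
        _ = w.length := Ordinal.mul_div_cancel _ hL
    exact ext' hlen fun α => by rw [← hsign z α, ← hsign w α, h]
  refine ⟨hlt, fun z w => ?_⟩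
  constructor
  · rintro ⟨hle, hne⟩
    refine ⟨fun γ hγ => ?_, fun h => hne (hinj _ _ h)⟩
    have hγ' : γ < x.length * z.length := hγ
    rw [mul_sign x z hL, mul_sign x w hL,
      hle _ (by rwa [Ordinal.div_lt hL])]
  · rintro ⟨hle, hne⟩
    refine ⟨fun α hα => ?_, fun h => hne (by rw [h])⟩
    have hγ : x.length * α < x.length * z.length :=
      (mul_lt_mul_iff_right₀ hLpos).2 hα
    have := hle _ hγ
    rwa [hsign, hsign] at this
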